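/- Let λ be a real number and h a real number with λh ≠ −2. Set ψ = e^{λh}(2 − λh)/(λh + 2), φ = h(e^{λh} + 1)/(λh + 2) and θ = 1/(e^{λh} + 1). Then: ψ + φλ(1 − θ) = e^{λh}(1 − φλθ); φ(1 − θ + ψθ) = he^{λh}(1 − φλθ)²; and φ²θ(1 − θ + ψθ) = (h²/2)e^{λh}(1 − φλθ)³. In particular, when λ = 0 these parameters reduce to ψ = 1, φ = h, θ = 1/2. -/

import Mathlib

/-- For the triple eigenvalue `λ` (Jordan case `J₆`), the parameters (41)
satisfy the three exactness conditions (40); for `λ = 0` they reduce to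
`ψ = 1, φ = h, θ = 1/2`. -/
theorem implicit_params_jordan_J6
    (lam h : ℝ) (hne : lam * h ≠ -2)
    (ψ φ θ : ℝ)
    (hψ : ψ = Real.exp (lam * h) * (2 - lam * h) / (lam * h + 2))
    (hφ : φ = h * (Real.exp (lam * h) + 1) / (lam * h + 2))
    (hθ : θ = 1 / (Real.exp (lam * h) + 1)) :
    ψ + φ * lam * (1 - θ) = Real.exp (lam * h) * (1 - φ * lam * θ) ∧
    φ * (1 - θ + ψ * θ) = h * Real.exp (lam * h) * (1 - φ * lam * θ) ^ 2 ∧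
    φ ^ 2 * θ * (1 - θ + ψ * θ) = h ^ 2 / 2 * Real.exp (lam * h) * (1 - φ * lam * θ) ^ 3 ∧
    (lam = 0 → ψ = 1 ∧ φ = h ∧ θ = 1 / 2) := by
  have hd : lam * h + 2 ≠ 0 := fun hc => hne (by linarith)
  have he : Real.exp (lam * h) + 1 ≠ 0 := by positivity
  subst hψ hφ hθ
  refine ⟨?_, ?_, ?_, ?_⟩
  · field_simp; ring
  · have hd' : h * lam + 2 ≠ 0 := by rwa [mul_comm]
    field_simp; ring
  · have hd' : h * lam + 2 ≠ 0 := by rwa [mul_comm]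
    field_simp; ring
  · intro hl; subst hl; norm_num
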